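/- For every prime p, 2 + 2p^2√3 + (2p+2)√(p^2-1) + 4p√(3p(p-1)) < 4p^4 + p^2 + p + 4. (This shows B(D_{2p^2}), with 4p^4 + p^2 + p + 4 vertices and this energy, is hypoenergetic.) -/
import Mathlib

theorem B_D2p2_hypoenergetic (p : ℕ) (hp : p.Prime) :
    2 + 2 * (p : ℝ) ^ 2 * Real.sqrt 3 + (2 * (p : ℝ) + 2) * Real.sqrt ((p : ℝ) ^ 2 - 1)
      + 4 * (p : ℝ) * Real.sqrt (3 * (p : ℝ) * ((p : ℝ) - 1))
      < 4 * (p : ℝ) ^ 4 + (p : ℝ) ^ 2 + (p : ℝ) + 4 := by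
  have h2 : (2 : ℝ) ≤ (p : ℝ) := by exact_mod_cast hp.two_le
  have h1 : Real.sqrt 3 < 2 := by
    rw [show (2:ℝ) = Real.sqrt 4 by rw [show (4:ℝ) = 2^2 by norm_num, Real.sqrt_sq]; norm_num]
    exact Real.sqrt_lt_sqrt (by norm_num) (by norm_num)
  have hb : Real.sqrt ((p : ℝ) ^ 2 - 1) < p :=
    (Real.sqrt_lt' (by linarith)).mpr (by nlinarith)
  have hc : Real.sqrt (3 * (p : ℝ) * ((p : ℝ) - 1)) < 2 * p :=
    (Real.sqrt_lt' (by linarith)).mpr (by nlinarith)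
  have h0 : (0:ℝ) ≤ Real.sqrt 3 := Real.sqrt_nonneg _
  nlinarith [sq_nonneg ((p:ℝ) - 2), sq_nonneg ((p:ℝ)^2 - 2)]
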